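/- Let f : A ⥤ B be a functor, g : X ⥤ A a functor which is bijective on objects, and h : X ⥤ B a discrete opfibration such that g ⋙ f = h. For an object a of A and a morphism u : f.obj a ⟶ b of B, define φ(a,u) := g.map of the unique h-lift of u at (g.obj)⁻¹(a), and p(a,u) := g.obj of the codomain of that lift. Then (f, φ) is a delta lens A ⇄ B. -/

import Mathlib

open CategoryTheory

/-- A functor is a discrete opfibration if every morphism out of the image of an object
has a unique lift. -/
def IsDiscreteOpfibration {X B : Type*} [Category X] [Category B] (h : X ⥤ B) : Prop :=
  ∀ (x : X) (b : B) (u : h.obj x ⟶ b),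
    ∃! w : Σ x' : X, (x ⟶ x'), ∃ e : h.obj w.1 = b, h.map w.2 ≫ eqToHom e = u

/-- A delta lens `(f, φ) : A ⇄ B`. -/
structure DeltaLens (A B : Type*) [Category A] [Category B] where
  f : A ⥤ B
  p : ∀ (a : A) (b : B), (f.obj a ⟶ b) → A
  lift : ∀ (a : A) (b : B) (u : f.obj a ⟶ b), a ⟶ p a b u
  f_p : ∀ (a : A) (b : B) (u : f.obj a ⟶ b), f.obj (p a b u) = b
  f_lift : ∀ (a : A) (b : B) (u : f.obj a ⟶ b), f.map (lift a b u) ≫ eqToHom (f_p a b u) = u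
  p_id : ∀ a : A, p a (f.obj a) (𝟙 (f.obj a)) = a
  lift_id : ∀ a : A, lift a (f.obj a) (𝟙 (f.obj a)) ≫ eqToHom (p_id a) = 𝟙 a
  p_comp : ∀ (a : A) (b b' : B) (u : f.obj a ⟶ b) (v : b ⟶ b'),
    p a b' (u ≫ v) = p (p a b u) b' (eqToHom (f_p a b u) ≫ v)
  lift_comp : ∀ (a : A) (b b' : B) (u : f.obj a ⟶ b) (v : b ⟶ b'),
    lift a b' (u ≫ v) ≫ eqToHom (p_comp a b b' u v) =
      lift a b u ≫ lift (p a b u) b' (eqToHom (f_p a b u) ≫ v)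

variable {X A B : Type*} [Category X] [Category A] [Category B]

/-- The inverse of the object bijection of `g`. -/
noncomputable def gInv (g : X ⥤ A) (hg : Function.Bijective g.obj) : A → X :=
  (Equiv.ofBijective g.obj hg).symm

theorem gInv_spec (g : X ⥤ A) (hg : Function.Bijective g.obj) (a : A) :
    g.obj (gInv g hg a) = a :=
  (Equiv.ofBijective g.obj hg).apply_symm_apply a

theorem hObj_gInv (f : A ⥤ B) (g : X ⥤ A) (h : X ⥤ B)
    (hg : Function.Bijective g.obj) (hcomp : g ⋙ f = h) (a : A) :
    h.obj (gInv g hg a) = f.obj a := by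
  rw [← hcomp]
  exact congrArg f.obj (gInv_spec g hg a)

/-- The unique `h`-lift of `u` (transported to start at `h.obj ((g.obj)⁻¹ a)`)
at `(g.obj)⁻¹ a`. -/
noncomputable def spanChosen (f : A ⥤ B) (g : X ⥤ A) (h : X ⥤ B)
    (hg : Function.Bijective g.obj) (hh : IsDiscreteOpfibration h) (hcomp : g ⋙ f = h)
    (a : A) (b : B) (u : f.obj a ⟶ b) : Σ x' : X, (gInv g hg a ⟶ x') :=
  Classical.choose (hh (gInv g hg a) b (eqToHom (hObj_gInv f g h hg hcomp a) ≫ u))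

/-- The codomain assignment `p(a, u)` of the induced delta lens. -/
noncomputable def spanP (f : A ⥤ B) (g : X ⥤ A) (h : X ⥤ B)
    (hg : Function.Bijective g.obj) (hh : IsDiscreteOpfibration h) (hcomp : g ⋙ f = h)
    (a : A) (b : B) (u : f.obj a ⟶ b) : A :=
  g.obj (spanChosen f g h hg hh hcomp a b u).1

/-- The lift assignment `φ(a, u)` of the induced delta lens. -/
noncomputable def spanLift (f : A ⥤ B) (g : X ⥤ A) (h : X ⥤ B)
    (hg : Function.Bijective g.obj) (hh : IsDiscreteOpfibration h) (hcomp : g ⋙ f = h)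
    (a : A) (b : B) (u : f.obj a ⟶ b) : a ⟶ spanP f g h hg hh hcomp a b u :=
  eqToHom (gInv_spec g hg a).symm ≫ g.map (spanChosen f g h hg hh hcomp a b u).2

section Aux

variable (f : A ⥤ B) (g : X ⥤ A) (h : X ⥤ B)
    (hg : Function.Bijective g.obj) (hh : IsDiscreteOpfibration h) (hcomp : g ⋙ f = h)

theorem sigma_hom_eq {x : X} {s t : Σ x' : X, (x ⟶ x')} (hst : s = t) :
    s.2 = t.2 ≫ eqToHom (congrArg Sigma.fst hst.symm) := by subst hst; simp

theorem spanChosen_spec (a : A) (b : B) (u : f.obj a ⟶ b) :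
    ∃ e : h.obj (spanChosen f g h hg hh hcomp a b u).1 = b,
      h.map (spanChosen f g h hg hh hcomp a b u).2 ≫ eqToHom e =
        eqToHom (hObj_gInv f g h hg hcomp a) ≫ u :=
  (Classical.choose_spec (hh (gInv g hg a) b (eqToHom (hObj_gInv f g h hg hcomp a) ≫ u))).1

theorem spanChosen_unique (a : A) (b : B) (u : f.obj a ⟶ b)
    (w : Σ x' : X, (gInv g hg a ⟶ x'))
    (hw : ∃ e : h.obj w.1 = b,
      h.map w.2 ≫ eqToHom e = eqToHom (hObj_gInv f g h hg hcomp a) ≫ u) :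
    spanChosen f g h hg hh hcomp a b u = w :=
  ((Classical.choose_spec (hh (gInv g hg a) b
    (eqToHom (hObj_gInv f g h hg hcomp a) ≫ u))).2 w hw).symm

theorem span_f_p (a : A) (b : B) (u : f.obj a ⟶ b) :
    f.obj (spanP f g h hg hh hcomp a b u) = b := by
  subst hcomp
  exact (spanChosen_spec f g _ hg hh rfl a b u).choose

theorem span_f_lift (a : A) (b : B) (u : f.obj a ⟶ b) :
    f.map (spanLift f g h hg hh hcomp a b u) ≫
      eqToHom (span_f_p f g h hg hh hcomp a b u) = u := by
  subst hcomp
  obtain ⟨e, he⟩ := spanChosen_spec f g _ hg hh rfl a b u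
  simp only [spanLift, Functor.map_comp, eqToHom_map, Category.assoc]
  have : f.map (g.map (spanChosen f g (g ⋙ f) hg hh rfl a b u).2) ≫
      eqToHom (span_f_p f g (g ⋙ f) hg hh rfl a b u) =
      eqToHom (hObj_gInv f g (g ⋙ f) hg rfl a) ≫ u := he
  show f.map (eqToHom (gInv_spec g hg a).symm ≫ g.map (spanChosen f g (g ⋙ f) hg hh rfl a b u).2) ≫
    eqToHom (span_f_p f g (g ⋙ f) hg hh rfl a b u) = u
  rw [Functor.map_comp, eqToHom_map, Category.assoc, this, ← Category.assoc, eqToHom_trans, eqToHom_refl, Category.id_comp]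

theorem spanChosen_id (a : A) :
    spanChosen f g h hg hh hcomp a (f.obj a) (𝟙 (f.obj a)) = ⟨gInv g hg a, 𝟙 _⟩ := by
  apply spanChosen_unique
  exact ⟨hObj_gInv f g h hg hcomp a, by simp⟩

theorem span_p_id (a : A) :
    spanP f g h hg hh hcomp a (f.obj a) (𝟙 (f.obj a)) = a := by
  rw [spanP, spanChosen_id]
  exact gInv_spec g hg a

theorem e0_spec (a : A) (b : B) (u : f.obj a ⟶ b) :
    gInv g hg (spanP f g h hg hh hcomp a b u) = (spanChosen f g h hg hh hcomp a b u).1 :=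
  (Equiv.ofBijective g.obj hg).symm_apply_apply _

theorem spanChosen_comp (a : A) (b b' : B) (u : f.obj a ⟶ b) (v : b ⟶ b') :
    spanChosen f g h hg hh hcomp a b' (u ≫ v) =
      ⟨(spanChosen f g h hg hh hcomp (spanP f g h hg hh hcomp a b u) b'
          (eqToHom (span_f_p f g h hg hh hcomp a b u) ≫ v)).1,
        (spanChosen f g h hg hh hcomp a b u).2 ≫
          eqToHom (e0_spec f g h hg hh hcomp a b u).symm ≫
          (spanChosen f g h hg hh hcomp (spanP f g h hg hh hcomp a b u) b'
            (eqToHom (span_f_p f g h hg hh hcomp a b u) ≫ v)).2⟩ := by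
  subst hcomp
  obtain ⟨e1, he1⟩ := spanChosen_spec f g _ hg hh rfl a b u
  obtain ⟨e2, he2⟩ := spanChosen_spec f g _ hg hh rfl (spanP f g (g ⋙ f) hg hh rfl a b u) b'
    (eqToHom (span_f_p f g (g ⋙ f) hg hh rfl a b u) ≫ v)
  apply spanChosen_unique
  refine ⟨e2, ?_⟩
  simp only [Functor.map_comp, eqToHom_map, Category.assoc]
  rw [he2]
  rw [show ((g ⋙ f).map (spanChosen f g (g ⋙ f) hg hh rfl a b u).2 ≫
      eqToHom (congrArg (g ⋙ f).obj (e0_spec f g (g ⋙ f) hg hh rfl a b u).symm) ≫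
      eqToHom (hObj_gInv f g (g ⋙ f) hg rfl (spanP f g (g ⋙ f) hg hh rfl a b u)) ≫
      eqToHom (span_f_p f g (g ⋙ f) hg hh rfl a b u) ≫ v)
      = ((g ⋙ f).map (spanChosen f g (g ⋙ f) hg hh rfl a b u).2 ≫ eqToHom e1) ≫ v by
    simp]
  rw [he1]
  simp

theorem span_p_comp (a : A) (b b' : B) (u : f.obj a ⟶ b) (v : b ⟶ b') :
    spanP f g h hg hh hcomp a b' (u ≫ v) =
      spanP f g h hg hh hcomp (spanP f g h hg hh hcomp a b u) b'
        (eqToHom (span_f_p f g h hg hh hcomp a b u) ≫ v) := by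
  rw [spanP, spanChosen_comp]
  rfl

theorem eqToHom_comp_eqToHom_self {C : Type*} [Category C] {x y z : C} (p : x = y) (q : y = z)
    (r : z = x) : (eqToHom p ≫ eqToHom q) ≫ eqToHom r = 𝟙 x := by simp

theorem comp_eqToHom_eqToHom_cancel {C : Type*} [Category C] {w x y z t s : C}
    (e1 : w ⟶ x) (m1 : x ⟶ y) (e2 : y ⟶ z) (m2 : z ⟶ t) (p : t = s) (q : s = t) :
    (e1 ≫ m1 ≫ e2 ≫ m2 ≫ eqToHom p) ≫ eqToHom q = (e1 ≫ m1) ≫ e2 ≫ m2 := by simp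

end Aux

/-- Given `f : A ⥤ B`, a functor `g : X ⥤ A` which is bijective on objects and a
discrete opfibration `h : X ⥤ B` with `g ⋙ f = h`, the data `(f, φ)` defined from the
unique `h`-lifts is a delta lens `A ⇄ B`. -/
theorem span_deltaLens (f : A ⥤ B) (g : X ⥤ A) (h : X ⥤ B)
    (hg : Function.Bijective g.obj) (hh : IsDiscreteOpfibration h) (hcomp : g ⋙ f = h) :
    ∃ L : DeltaLens A B,
      L.f = f ∧
      HEq L.p (spanP f g h hg hh hcomp) ∧
      HEq L.lift (spanLift f g h hg hh hcomp) := by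
  refine ⟨{ f := f
            p := spanP f g h hg hh hcomp
            lift := spanLift f g h hg hh hcomp
            f_p := span_f_p f g h hg hh hcomp
            f_lift := span_f_lift f g h hg hh hcomp
            p_id := span_p_id f g h hg hh hcomp
            lift_id := ?_
            p_comp := span_p_comp f g h hg hh hcomp
            lift_comp := ?_ }, rfl, HEq.rfl, HEq.rfl⟩
  · intro a
    have := sigma_hom_eq (spanChosen_id f g h hg hh hcomp a)
    rw [spanLift, this]
    simp [eqToHom_map]
    exact eqToHom_comp_eqToHom_self (C := A) _ _ _
  · intro a b b' u v
    have := sigma_hom_eq (spanChosen_comp f g h hg hh hcomp a b b' u v)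
    rw [spanLift, this]
    simp [spanLift, eqToHom_map, Category.assoc]
    exact comp_eqToHom_eqToHom_cancel (C := A) _ _ _ _ _ _
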